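/- Energy-reserve revenue identity for renewable units: at an optimal primal-dual solution, for a renewable unit at time t, the combined ex-ante credit π^w_t · w_t + π^{u,w}_t · r^{u,w}_t + π^{d,w}_t · r^{d,w}_t equals ῑ^U_t · W̄_t, the product of the multiplier of the upper capacity bound and the maximum available output. -/
import Mathlib


/-- Energy-reserve revenue identity for renewable units: at an optimal primal-dual
solution, the combined ex-ante credit `π^w w + π^{u,w} r^{u,w} + π^{d,w} r^{d,w}`
equals `ῑ^U W̄`, the upper-capacity multiplier times the maximum available output. -/
theorem renewable_revenue_identity
    (w ruw rdw Wbar : ℝ)                       -- dispatch, reserves, capacity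
    (ιUbar ιUlow ιDbar ιDlow : ℝ)              -- KKT multipliers
    (πw πu πd : ℝ)                             -- prices
    (hιUbar : 0 ≤ ιUbar) (hιUlow : 0 ≤ ιUlow) (hιDbar : 0 ≤ ιDbar) (hιDlow : 0 ≤ ιDlow)
    (hWbar : 0 ≤ Wbar)
    (hstat_w : -πw + ιUbar - ιDbar = 0)        -- stationarity in w
    (hstat_u : -πu + ιUbar - ιUlow = 0)        -- stationarity in r^{u,w}
    (hstat_d : -πd + ιDbar - ιDlow = 0)        -- stationarity in r^{d,w}
    (hcs_U_hi : ιUbar * (ruw - Wbar + w) = 0)  -- complementary slackness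
    (hcs_U_lo : ιUlow * ruw = 0)
    (hcs_D_hi : ιDbar * (rdw - w) = 0)
    (hcs_D_lo : ιDlow * rdw = 0) :
    πw * w + πu * ruw + πd * rdw = ιUbar * Wbar := by
  linear_combination -w * hstat_w - ruw * hstat_u - rdw * hstat_d + hcs_U_hi - hcs_U_lo + hcs_D_hi - hcs_D_lo
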